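/- Let Λ, Δ, G₁, G₂ be complex r×r matrices with Λ Hermitian positive semidefinite. Then 2 Re Tr(Λ G₁ Δ Λ G₂) ≤ √r · ‖Δ‖₂ · ‖Λ‖₂² · (Tr(G₁ G₁*) + Tr(G₂ G₂*)), where ‖·‖₂ is the spectral norm. -/

import Mathlib

open Finset
open scoped Matrix ComplexOrder

/-- The spectral (operator) norm of a square complex matrix. -/
noncomputable def specNorm {r : ℕ} (M : Matrix (Fin r) (Fin r) ℂ) : ℝ :=
  ‖Matrix.toEuclideanCLM (𝕜 := ℂ) M‖

open scoped Matrix.Norms.L2Operator in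
lemma specNorm_eq {r : ℕ} (M : Matrix (Fin r) (Fin r) ℂ) : specNorm M = ‖M‖ := rfl

lemma specNorm_nonneg {r : ℕ} (M : Matrix (Fin r) (Fin r) ℂ) : 0 ≤ specNorm M :=
  norm_nonneg _

lemma frob_re {r : ℕ} (X : Matrix (Fin r) (Fin r) ℂ) :
    ((X * Xᴴ).trace).re = ∑ i, ∑ j, ‖X i j‖ ^ 2 := by
  rw [Matrix.trace, Complex.re_sum]
  refine Finset.sum_congr rfl fun i _ => ?_
  rw [Matrix.diag_apply, Matrix.mul_apply, Complex.re_sum]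
  refine Finset.sum_congr rfl fun j _ => ?_
  rw [Matrix.conjTranspose_apply, Complex.star_def, Complex.mul_conj]
  simp [Complex.normSq_eq_norm_sq, ← Complex.ofReal_pow]

lemma trace_re_le {r : ℕ} (X Y : Matrix (Fin r) (Fin r) ℂ) :
    ((X * Y).trace).re ≤
      Real.sqrt (∑ i, ∑ j, ‖X i j‖ ^ 2) * Real.sqrt (∑ i, ∑ j, ‖Y i j‖ ^ 2) := by
  have h1 : ((X * Y).trace).re ≤ ∑ p : Fin r × Fin r, ‖X p.1 p.2‖ * ‖Y p.2 p.1‖ := by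
    rw [Matrix.trace, Complex.re_sum]
    calc ∑ i, ((X * Y).diag i).re ≤ ∑ i, ∑ j, ‖X i j‖ * ‖Y j i‖ := by
          refine Finset.sum_le_sum fun i _ => ?_
          rw [Matrix.diag_apply, Matrix.mul_apply, Complex.re_sum]
          refine Finset.sum_le_sum fun j _ => ?_
          calc (X i j * Y j i).re ≤ ‖X i j * Y j i‖ := Complex.re_le_norm _
            _ = ‖X i j‖ * ‖Y j i‖ := norm_mul _ _
      _ = ∑ p : Fin r × Fin r, ‖X p.1 p.2‖ * ‖Y p.2 p.1‖ := by
          rw [← Finset.sum_product']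
          rfl
  refine h1.trans ?_
  have h2 := Real.sum_mul_le_sqrt_mul_sqrt Finset.univ
    (fun p : Fin r × Fin r => ‖X p.1 p.2‖) (fun p : Fin r × Fin r => ‖Y p.2 p.1‖)
  refine h2.trans (le_of_eq ?_)
  congr 1
  · congr 1
    rw [← Finset.sum_product']
    rfl
  · congr 1
    rw [Finset.sum_comm]
    rw [← Finset.sum_product']
    rfl

open scoped Matrix.Norms.L2Operator in
lemma frob_mul_le {r : ℕ} (A X : Matrix (Fin r) (Fin r) ℂ) :
    ∑ i, ∑ j, ‖(A * X) i j‖ ^ 2 ≤ specNorm A ^ 2 * ∑ i, ∑ j, ‖X i j‖ ^ 2 := by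
  rw [specNorm_eq]
  rw [show ∑ i, ∑ j, ‖(A * X) i j‖ ^ 2 = ∑ j, ∑ i, ‖(A * X) i j‖ ^ 2 from Finset.sum_comm]
  rw [show (∑ i, ∑ j, ‖X i j‖ ^ 2 : ℝ) = ∑ j, ∑ i, ‖X i j‖ ^ 2 from Finset.sum_comm, Finset.mul_sum]
  refine Finset.sum_le_sum fun j _ => ?_
  have key := Matrix.l2_opNorm_mulVec A ((EuclideanSpace.equiv (Fin r) ℂ).symm (fun k => X k j))
  have hL : ∑ i, ‖(A * X) i j‖ ^ 2
      = ‖(EuclideanSpace.equiv (Fin r) ℂ).symm (A *ᵥ ((EuclideanSpace.equiv (Fin r) ℂ).symm (fun k => X k j)))‖ ^ 2 := by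
    rw [EuclideanSpace.norm_eq, Real.sq_sqrt (by positivity)]
    rfl
  have hR : ‖(EuclideanSpace.equiv (Fin r) ℂ).symm (fun k => X k j)‖ ^ 2 = ∑ i, ‖X i j‖ ^ 2 := by
    rw [EuclideanSpace.norm_eq, Real.sq_sqrt (by positivity)]
    rfl
  rw [hL, ← hR]
  exact (pow_le_pow_left₀ (norm_nonneg _) key 2).trans (le_of_eq (mul_pow _ _ _))

/-- For `Λ` Hermitian positive semidefinite and arbitrary `Δ, G₁, G₂`:
`2 Re Tr(Λ G₁ Δ Λ G₂) ≤ √r ‖Δ‖₂ ‖Λ‖₂² (Tr(G₁G₁ᴴ) + Tr(G₂G₂ᴴ))`. -/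
theorem stmt4 (r : ℕ) (Λ Δ G₁ G₂ : Matrix (Fin r) (Fin r) ℂ)
    (hΛ : Λ.PosSemidef) :
    2 * ((Λ * G₁ * Δ * Λ * G₂).trace).re ≤
      Real.sqrt r * specNorm Δ * specNorm Λ ^ 2 *
        (((G₁ * G₁ᴴ).trace).re + ((G₂ * G₂ᴴ).trace).re) := by
  set F : Matrix (Fin r) (Fin r) ℂ → ℝ := fun X => ∑ i, ∑ j, ‖X i j‖ ^ 2 with hF
  have hFnonneg : ∀ X, 0 ≤ F X := fun X => by positivity
  -- step 1: the trace bound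
  have hassoc : Λ * G₁ * Δ * Λ * G₂ = (Λ * G₁) * (Δ * (Λ * G₂)) := by
    noncomm_ring
  have h1 : ((Λ * G₁ * Δ * Λ * G₂).trace).re
      ≤ Real.sqrt (F (Λ * G₁)) * Real.sqrt (F (Δ * (Λ * G₂))) := by
    rw [hassoc]; exact trace_re_le _ _
  have hsq1 : Real.sqrt (F (Λ * G₁)) ≤ specNorm Λ * Real.sqrt (F G₁) := by
    have := frob_mul_le Λ G₁
    calc Real.sqrt (F (Λ * G₁)) ≤ Real.sqrt (specNorm Λ ^ 2 * F G₁) := Real.sqrt_le_sqrt this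
      _ = specNorm Λ * Real.sqrt (F G₁) := by
          rw [Real.sqrt_mul (by positivity), Real.sqrt_sq (specNorm_nonneg _)]
  have hsq2 : Real.sqrt (F (Δ * (Λ * G₂))) ≤ specNorm Δ * (specNorm Λ * Real.sqrt (F G₂)) := by
    have hA : Real.sqrt (F (Δ * (Λ * G₂))) ≤ specNorm Δ * Real.sqrt (F (Λ * G₂)) := by
      calc Real.sqrt (F (Δ * (Λ * G₂))) ≤ Real.sqrt (specNorm Δ ^ 2 * F (Λ * G₂)) :=
            Real.sqrt_le_sqrt (frob_mul_le _ _)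
        _ = specNorm Δ * Real.sqrt (F (Λ * G₂)) := by
            rw [Real.sqrt_mul (by positivity), Real.sqrt_sq (specNorm_nonneg _)]
    have hB : Real.sqrt (F (Λ * G₂)) ≤ specNorm Λ * Real.sqrt (F G₂) := by
      calc Real.sqrt (F (Λ * G₂)) ≤ Real.sqrt (specNorm Λ ^ 2 * F G₂) :=
            Real.sqrt_le_sqrt (frob_mul_le _ _)
        _ = specNorm Λ * Real.sqrt (F G₂) := by
            rw [Real.sqrt_mul (by positivity), Real.sqrt_sq (specNorm_nonneg _)]
    exact hA.trans (mul_le_mul_of_nonneg_left hB (specNorm_nonneg _))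
  -- combine
  have h2 : 2 * ((Λ * G₁ * Δ * Λ * G₂).trace).re
      ≤ specNorm Δ * specNorm Λ ^ 2 * (F G₁ + F G₂) := by
    have hmul : Real.sqrt (F (Λ * G₁)) * Real.sqrt (F (Δ * (Λ * G₂)))
        ≤ (specNorm Λ * Real.sqrt (F G₁)) * (specNorm Δ * (specNorm Λ * Real.sqrt (F G₂))) :=
      mul_le_mul hsq1 hsq2 (Real.sqrt_nonneg _) (mul_nonneg (specNorm_nonneg _) (Real.sqrt_nonneg _))
    have h3 : 2 * ((Λ * G₁ * Δ * Λ * G₂).trace).re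
        ≤ 2 * ((specNorm Λ * Real.sqrt (F G₁)) * (specNorm Δ * (specNorm Λ * Real.sqrt (F G₂)))) := by
      have := h1.trans hmul
      linarith
    refine h3.trans ?_
    have hab : 2 * (Real.sqrt (F G₁) * Real.sqrt (F G₂)) ≤ F G₁ + F G₂ := by
      have := two_mul_le_add_sq (Real.sqrt (F G₁)) (Real.sqrt (F G₂))
      rw [Real.sq_sqrt (hFnonneg G₁), Real.sq_sqrt (hFnonneg G₂)] at this
      linarith
    have hcoef : (0:ℝ) ≤ specNorm Δ * specNorm Λ ^ 2 :=
      mul_nonneg (specNorm_nonneg _) (sq_nonneg _)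
    calc 2 * ((specNorm Λ * Real.sqrt (F G₁)) * (specNorm Δ * (specNorm Λ * Real.sqrt (F G₂))))
        = specNorm Δ * specNorm Λ ^ 2 * (2 * (Real.sqrt (F G₁) * Real.sqrt (F G₂))) := by ring
      _ ≤ specNorm Δ * specNorm Λ ^ 2 * (F G₁ + F G₂) :=
          mul_le_mul_of_nonneg_left hab hcoef
  rw [frob_re G₁, frob_re G₂]
  rcases Nat.eq_zero_or_pos r with hr | hr
  · subst hr
    simp [Matrix.trace, Finset.sum_of_isEmpty]
  · have hsr : (1:ℝ) ≤ Real.sqrt r := by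
      rw [show (1:ℝ) = Real.sqrt 1 by rw [Real.sqrt_one]]
      exact Real.sqrt_le_sqrt (Nat.one_le_cast.mpr hr)
    have hcoef : (0:ℝ) ≤ specNorm Δ * specNorm Λ ^ 2 * (F G₁ + F G₂) :=
      mul_nonneg (mul_nonneg (specNorm_nonneg _) (sq_nonneg _))
        (add_nonneg (hFnonneg G₁) (hFnonneg G₂))
    have hrhs : specNorm Δ * specNorm Λ ^ 2 * (F G₁ + F G₂)
        ≤ Real.sqrt r * (specNorm Δ * specNorm Λ ^ 2 * (F G₁ + F G₂)) := by
      nlinarith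
    refine h2.trans (hrhs.trans (le_of_eq ?_))
    ring
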